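/- Let f: ℝ → ℝ be a 1-dimensional quasisymmetric mapping. Then there exist constants β > 0 and 0 < p ≤ 1 ≤ q such that for all intervals I' ⊆ I of positive length, β·(|I'|/|I|)^q ≤ |f(I')|/|f(I)| ≤ 4·(|I'|/|I|)^p; moreover, for every ρ > 0 there exists K_ρ > 0 such that |f(ρI)|/|f(I)| ≤ K_ρ for every interval I of positive length, where ρI denotes the interval with the same center as I and length ρ·|I|. -/
import Mathlib


/-- A homeomorphism `f : ℝ → ℝ` is a 1-dimensional quasisymmetric mapping if there is a
homeomorphism `η : [0,∞) → [0,∞)` with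
`|f x - f a| / |f x - f b| ≤ η (|x - a| / |x - b|)` for all `x ≠ b`. -/
def IsQuasisymmetric (f : ℝ → ℝ) : Prop :=
  IsHomeomorph f ∧
    ∃ η : (Set.Ici (0 : ℝ)) ≃ₜ (Set.Ici (0 : ℝ)),
      ∀ x a b : ℝ, x ≠ b →
        |f x - f a| / |f x - f b| ≤
          (η ⟨|x - a| / |x - b|,
            Set.mem_Ici.mpr (div_nonneg (abs_nonneg _) (abs_nonneg _))⟩).1

open Real Set

lemma qs_numLower (H : ℝ) (hH : 1 ≤ H) :
    ∃ q β : ℝ, 0 < β ∧ 1 ≤ q ∧ ∀ t : ℝ, 0 < t → t ≤ 1 →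
      ∃ n : ℕ, 1 / t ≤ 2 ^ n ∧ β * t ^ q * (1 + H) ^ (2 * n) ≤ 1 := by
  have h2H : (2 : ℝ) ≤ 1 + H := by linarith
  have hHpos : (0 : ℝ) < 1 + H := by linarith
  set L : ℝ := Real.logb 2 (1 + H) with hL
  set q : ℝ := 2 * L with hqdef
  have hL1 : 1 ≤ L := by
    have h := (Real.logb_le_logb one_lt_two two_pos hHpos).mpr h2H
    rwa [Real.logb_self_eq_one one_lt_two] at h
  have hq1 : 1 ≤ q := by nlinarith
  have hq0 : 0 ≤ q := by linarith
  refine ⟨q, (2 : ℝ) ^ (-q), Real.rpow_pos_of_pos two_pos _, hq1, ?_⟩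
  intro t ht0 ht1
  have hit : 1 ≤ 1 / t := by
    rw [le_div_iff₀ ht0]; linarith
  have hitpos : 0 < 1 / t := by positivity
  have hlog0 : 0 ≤ Real.logb 2 (1 / t) := Real.logb_nonneg one_lt_two hit
  set n : ℕ := ⌈Real.logb 2 (1 / t)⌉₊ with hn
  have e1t : (2 : ℝ) ^ Real.logb 2 (1 / t) = 1 / t :=
    Real.rpow_logb two_pos (by norm_num) hitpos
  refine ⟨n, ?_, ?_⟩
  · calc 1 / t = (2 : ℝ) ^ Real.logb 2 (1 / t) := e1t.symm
      _ ≤ (2 : ℝ) ^ (n : ℝ) := by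
          apply Real.rpow_le_rpow_left_iff one_lt_two |>.mpr (Nat.le_ceil _)
      _ = 2 ^ n := by rw [Real.rpow_natCast]
  · have hn2 : (2 : ℝ) ^ n ≤ 2 / t := by
      have h1 : (n : ℝ) ≤ Real.logb 2 (1 / t) + 1 := (Nat.ceil_lt_add_one hlog0).le
      calc (2 : ℝ) ^ n = (2 : ℝ) ^ (n : ℝ) := by rw [Real.rpow_natCast]
        _ ≤ (2 : ℝ) ^ (Real.logb 2 (1 / t) + 1) :=
            (Real.rpow_le_rpow_left_iff one_lt_two).mpr h1
        _ = (1 / t) * 2 := by rw [Real.rpow_add two_pos, e1t, Real.rpow_one]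
        _ = 2 / t := by ring
    have hkey : ((1 + H) : ℝ) ^ (2 * n) ≤ (2 / t) ^ q := by
      have e1 : ((1 + H) : ℝ) ^ (2 * n) = ((2 : ℝ) ^ n) ^ q := by
        rw [← Real.rpow_logb two_pos (by norm_num) hHpos, ← hL,
          ← Real.rpow_natCast ((2 : ℝ) ^ L) (2 * n), ← Real.rpow_mul (le_of_lt two_pos),
          ← Real.rpow_natCast (2 : ℝ) n, ← Real.rpow_mul (le_of_lt two_pos)]
        congr 1
        push_cast
        ring
      rw [e1]
      exact Real.rpow_le_rpow (by positivity) hn2 hq0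
    have htq : (0 : ℝ) < t ^ q := Real.rpow_pos_of_pos ht0 _
    have h2q : (0 : ℝ) < (2 : ℝ) ^ q := Real.rpow_pos_of_pos two_pos _
    calc (2 : ℝ) ^ (-q) * t ^ q * (1 + H) ^ (2 * n)
        ≤ (2 : ℝ) ^ (-q) * t ^ q * (2 / t) ^ q := by
          apply mul_le_mul_of_nonneg_left hkey (by positivity)
      _ = 1 := by
          rw [Real.div_rpow (le_of_lt two_pos) (le_of_lt ht0), Real.rpow_neg (le_of_lt two_pos)]
          field_simp

lemma qs_numUpper (H : ℝ) (hH : 1 ≤ H) :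
    ∃ p : ℝ, 0 < p ∧ p ≤ 1 ∧ ∀ t : ℝ, 0 < t → t ≤ 1 →
      ∃ k : ℕ, (2 : ℝ) ^ (2 * k) * t ≤ 1 ∧ H ^ k ≤ 4 * t ^ p * (1 + H) ^ k := by
  have hHpos : (0 : ℝ) < H := by linarith
  set r : ℝ := (1 + H) / H with hr
  have hr1 : 1 < r := by rw [hr, lt_div_iff₀ hHpos]; linarith
  have hrpos : 0 < r := by linarith
  have hr2 : r ≤ 2 := by rw [hr, div_le_iff₀ hHpos]; linarith
  set P : ℝ := Real.logb 2 r with hP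
  have hP0 : 0 < P := Real.logb_pos one_lt_two hr1
  have hP1 : P ≤ 1 := by
    have h := (Real.logb_le_logb one_lt_two hrpos two_pos).mpr hr2
    rwa [Real.logb_self_eq_one one_lt_two] at h
  refine ⟨P / 2, by linarith, by linarith, ?_⟩
  intro t ht0 ht1
  have hit : 1 ≤ 1 / t := by rw [le_div_iff₀ ht0]; linarith
  have hitpos : 0 < 1 / t := by positivity
  have hlog0 : 0 ≤ Real.logb 2 (1 / t) := Real.logb_nonneg one_lt_two hit
  set x : ℝ := Real.logb 2 (1 / t) with hx
  set k : ℕ := ⌊x / 2⌋₊ with hk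
  have e1t : (2 : ℝ) ^ x = 1 / t := Real.rpow_logb two_pos (by norm_num) hitpos
  have hk1 : ((2 * k : ℕ) : ℝ) ≤ x := by
    push_cast
    have := Nat.floor_le (by positivity : (0:ℝ) ≤ x / 2)
    linarith
  have hk2 : x < 2 * ((k : ℝ) + 1) := by
    have := Nat.lt_floor_add_one (x / 2)
    linarith
  refine ⟨k, ?_, ?_⟩
  · have : (2 : ℝ) ^ (2 * k) ≤ 1 / t := by
      calc (2 : ℝ) ^ (2 * k) = (2 : ℝ) ^ ((2 * k : ℕ) : ℝ) := by rw [Real.rpow_natCast]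
        _ ≤ (2 : ℝ) ^ x := (Real.rpow_le_rpow_left_iff one_lt_two).mpr hk1
        _ = 1 / t := e1t
    calc (2 : ℝ) ^ (2 * k) * t ≤ (1 / t) * t := mul_le_mul_of_nonneg_right this (le_of_lt ht0)
      _ = 1 := by field_simp
  · -- t > 2 ^ (-(2*(k+1))), so t^(P/2) > 2^(-(P*(k+1)))
    have htlow : (2 : ℝ) ^ (-(2 * ((k : ℝ) + 1))) < t := by
      have h1 : 1 / t < (2 : ℝ) ^ (2 * ((k : ℝ) + 1)) := by
        rw [← e1t]
        exact (Real.rpow_lt_rpow_left_iff one_lt_two).mpr hk2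
      rw [Real.rpow_neg (le_of_lt two_pos)]
      rw [div_lt_iff₀ ht0] at h1
      rw [inv_lt_iff_one_lt_mul₀ (by positivity)]
      nlinarith [Real.rpow_pos_of_pos two_pos (2 * ((k : ℝ) + 1))]
    have htp : (2 : ℝ) ^ (-(P * ((k : ℝ) + 1))) < t ^ (P / 2) := by
      have := Real.rpow_lt_rpow (by positivity) htlow (by linarith : (0:ℝ) < P / 2)
      calc (2 : ℝ) ^ (-(P * ((k : ℝ) + 1)))
          = ((2 : ℝ) ^ (-(2 * ((k : ℝ) + 1)))) ^ (P / 2) := by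
            rw [← Real.rpow_mul (le_of_lt two_pos)]
            congr 1; ring
        _ < t ^ (P / 2) := this
    have hrk : r ^ k = (2 : ℝ) ^ (P * k) := by
      rw [← Real.rpow_logb two_pos (by norm_num) hrpos, ← hP,
        ← Real.rpow_natCast ((2 : ℝ) ^ P) k, ← Real.rpow_mul (le_of_lt two_pos)]
    -- 4 * t^(P/2) * r^k > 4 * 2^(-P(k+1)) * 2^(Pk) = 4 * 2^(-P) ≥ 2 ≥ 1
    have hmain : 1 ≤ 4 * t ^ (P / 2) * r ^ k := by
      have h4 : (4 : ℝ) * ((2:ℝ) ^ (-(P * ((k : ℝ) + 1)))) * ((2:ℝ) ^ (P * (k:ℝ))) = 4 * (2:ℝ) ^ (-P) := by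
        rw [mul_assoc, ← Real.rpow_add two_pos]
        congr 2; ring
      have h2P : (1 : ℝ) / 2 ≤ (2 : ℝ) ^ (-P) := by
        have : ((2:ℝ)) ^ (-1 : ℝ) ≤ (2:ℝ) ^ (-P) :=
          (Real.rpow_le_rpow_left_iff one_lt_two).mpr (by linarith)
        calc (1:ℝ)/2 = (2:ℝ) ^ (-1 : ℝ) := by
              rw [Real.rpow_neg_one]; norm_num
          _ ≤ _ := this
      have hrkpos : (0:ℝ) < r ^ k := by positivity
      have hstep : 4 * ((2:ℝ) ^ (-(P * ((k : ℝ) + 1)))) * r ^ k ≤ 4 * t ^ (P / 2) * r ^ k := by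
        apply mul_le_mul_of_nonneg_right _ (le_of_lt hrkpos)
        nlinarith [htp]
      rw [hrk] at hstep
      rw [h4] at hstep
      rw [← hrk] at hstep
      nlinarith
    -- multiply by H^k
    have hHk : (0:ℝ) < H ^ k := by positivity
    have hfin : H ^ k * 1 ≤ H ^ k * (4 * t ^ (P / 2) * r ^ k) :=
      mul_le_mul_of_nonneg_left hmain (le_of_lt hHk)
    have hHr : H ^ k * r ^ k = (1 + H) ^ k := by
      rw [← mul_pow]
      congr 1
      rw [hr, mul_comm, div_mul_cancel₀ _ (ne_of_gt hHpos)]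
    calc H ^ k = H ^ k * 1 := by ring
      _ ≤ H ^ k * (4 * t ^ (P / 2) * r ^ k) := hfin
      _ = 4 * t ^ (P / 2) * (H ^ k * r ^ k) := by ring
      _ = 4 * t ^ (P / 2) * (1 + H) ^ k := by rw [hHr]


section core
variable {f : ℝ → ℝ} {H : ℝ}

lemma qs_mid (hm : StrictMono f) (hH : 1 ≤ H)
    (hqs : ∀ u v w : ℝ, |u - v| = |u - w| → u ≠ w → |f u - f v| ≤ H * |f u - f w|)
    {a b : ℝ} (hab : a < b) :
    f ((a + b) / 2) - f a ≤ H * (f b - f ((a + b) / 2)) ∧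
      f b - f ((a + b) / 2) ≤ H * (f ((a + b) / 2) - f a) := by
  set m := (a + b) / 2 with hmdef
  have ham : a < m := by rw [hmdef]; linarith
  have hmb : m < b := by rw [hmdef]; linarith
  have hfam : f a < f m := hm ham
  have hfmb : f m < f b := hm hmb
  have habs : |m - a| = |m - b| := by
    rw [abs_of_pos (by linarith), abs_of_neg (by linarith : m - b < 0), hmdef]; ring
  constructor
  · have h := hqs m a b habs hmb.ne
    rwa [abs_of_pos (by linarith), abs_of_neg (by linarith : f m - f b < 0),
      neg_sub] at h
  · have habs' : |m - b| = |m - a| := habs.symm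
    have h := hqs m b a habs' ham.ne'
    rwa [abs_of_neg (by linarith : f m - f b < 0), neg_sub,
      abs_of_pos (by linarith : 0 < f m - f a)] at h

lemma qs_L (hm : StrictMono f) (hH : 1 ≤ H)
    (hqs : ∀ u v w : ℝ, |u - v| = |u - w| → u ≠ w → |f u - f v| ≤ H * |f u - f w|) :
    ∀ n : ℕ, ∀ a v b : ℝ, a < v → v ≤ b → b - a ≤ 2 ^ n * (v - a) →
      f b - f a ≤ (1 + H) ^ n * (f v - f a) := by
  intro n
  induction n with
  | zero =>
    intro a v b hav hvb h
    simp only [pow_zero, one_mul] at h ⊢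
    have : v = b := le_antisymm hvb (by linarith)
    subst this
    exact le_refl _
  | succ n ih =>
    intro a v b hav hvb h
    have hab : a < b := lt_of_lt_of_le hav hvb
    set m := (a + b) / 2 with hmdef
    have hmid := qs_mid hm hH hqs hab
    have hfull : f b - f a ≤ (1 + H) * (f m - f a) := by
      have := hmid.2
      linarith
    have hfva : 0 < f v - f a := sub_pos.2 (hm hav)
    rcases le_or_gt m v with hmv | hvm
    · have h1 : f m - f a ≤ f v - f a := by
        have := hm.monotone hmv; linarith
      calc f b - f a ≤ (1 + H) * (f m - f a) := hfull
        _ ≤ (1 + H) * (f v - f a) := mul_le_mul_of_nonneg_left h1 (by linarith)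
        _ ≤ (1 + H) ^ (n + 1) * (f v - f a) := by
            apply mul_le_mul_of_nonneg_right _ (le_of_lt hfva)
            exact le_self_pow₀ (by linarith) (Nat.succ_ne_zero n)
    · have h2 : m - a ≤ 2 ^ n * (v - a) := by
        rw [pow_succ] at h
        have : m - a = (b - a) / 2 := by rw [hmdef]; ring
        nlinarith
      have hstep := ih a v m hav (le_of_lt hvm) h2
      calc f b - f a ≤ (1 + H) * (f m - f a) := hfull
        _ ≤ (1 + H) * ((1 + H) ^ n * (f v - f a)) :=
            mul_le_mul_of_nonneg_left hstep (by linarith)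
        _ = (1 + H) ^ (n + 1) * (f v - f a) := by ring

lemma qs_L' (hm : StrictMono f) (hH : 1 ≤ H)
    (hqs : ∀ u v w : ℝ, |u - v| = |u - w| → u ≠ w → |f u - f v| ≤ H * |f u - f w|) :
    ∀ n : ℕ, ∀ a u b : ℝ, a ≤ u → u < b → b - a ≤ 2 ^ n * (b - u) →
      f b - f a ≤ (1 + H) ^ n * (f b - f u) := by
  intro n
  induction n with
  | zero =>
    intro a u b hau hub h
    simp only [pow_zero, one_mul] at h ⊢
    have : u = a := le_antisymm (by linarith) hau
    subst this
    exact le_refl _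
  | succ n ih =>
    intro a u b hau hub h
    have hab : a < b := lt_of_le_of_lt hau hub
    set m := (a + b) / 2 with hmdef
    have hmid := qs_mid hm hH hqs hab
    have hfull : f b - f a ≤ (1 + H) * (f b - f m) := by
      have := hmid.1
      linarith
    have hfub : 0 < f b - f u := sub_pos.2 (hm hub)
    rcases le_or_gt u m with hum | hmu
    · have h1 : f b - f m ≤ f b - f u := by
        have := hm.monotone hum; linarith
      calc f b - f a ≤ (1 + H) * (f b - f m) := hfull
        _ ≤ (1 + H) * (f b - f u) := mul_le_mul_of_nonneg_left h1 (by linarith)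
        _ ≤ (1 + H) ^ (n + 1) * (f b - f u) := by
            apply mul_le_mul_of_nonneg_right _ (le_of_lt hfub)
            exact le_self_pow₀ (by linarith) (Nat.succ_ne_zero n)
    · have h2 : b - m ≤ 2 ^ n * (b - u) := by
        rw [pow_succ] at h
        have : b - m = (b - a) / 2 := by rw [hmdef]; ring
        nlinarith
      have hstep := ih m u b (le_of_lt hmu) hub h2
      calc f b - f a ≤ (1 + H) * (f b - f m) := hfull
        _ ≤ (1 + H) * ((1 + H) ^ n * (f b - f u)) :=
            mul_le_mul_of_nonneg_left hstep (by linarith)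
        _ = (1 + H) ^ (n + 1) * (f b - f u) := by ring

lemma qs_U (hm : StrictMono f) (hH : 1 ≤ H)
    (hqs : ∀ u v w : ℝ, |u - v| = |u - w| → u ≠ w → |f u - f v| ≤ H * |f u - f w|) :
    ∀ n : ℕ, ∀ a v b : ℝ, a < v → v ≤ b → 2 ^ n * (v - a) ≤ b - a →
      (1 + H) ^ n * (f v - f a) ≤ H ^ n * (f b - f a) := by
  intro n
  induction n with
  | zero =>
    intro a v b hav hvb h
    simp only [pow_zero, one_mul]
    have := hm.monotone hvb; linarith
  | succ n ih =>
    intro a v b hav hvb h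
    have hva : 0 < v - a := by linarith
    have h2n : (2:ℝ) ≤ 2 ^ (n + 1) := by
      calc (2:ℝ) = 2 ^ 1 := (pow_one 2).symm
        _ ≤ 2 ^ (n + 1) := pow_le_pow_right₀ one_le_two (by omega)
    have hab : a < b := by nlinarith
    set m := (a + b) / 2 with hmdef
    have hvm : v ≤ m := by
      have : 2 * (v - a) ≤ b - a := by nlinarith
      rw [hmdef]; linarith
    have ham : a < m := lt_of_lt_of_le hav hvm
    have hmid := qs_mid hm hH hqs hab
    have hcomb : (1 + H) * (f m - f a) ≤ H * (f b - f a) := by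
      have := hmid.1
      linarith
    have h2 : 2 ^ n * (v - a) ≤ m - a := by
      rw [pow_succ] at h
      have : m - a = (b - a) / 2 := by rw [hmdef]; ring
      nlinarith
    have hstep := ih a v m hav hvm h2
    calc (1 + H) ^ (n + 1) * (f v - f a)
        = (1 + H) * ((1 + H) ^ n * (f v - f a)) := by ring
      _ ≤ (1 + H) * (H ^ n * (f m - f a)) :=
          mul_le_mul_of_nonneg_left hstep (by linarith)
      _ = H ^ n * ((1 + H) * (f m - f a)) := by ring
      _ ≤ H ^ n * (H * (f b - f a)) :=
          mul_le_mul_of_nonneg_left hcomb (pow_nonneg (by linarith) n)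
      _ = H ^ (n + 1) * (f b - f a) := by ring

lemma qs_U' (hm : StrictMono f) (hH : 1 ≤ H)
    (hqs : ∀ u v w : ℝ, |u - v| = |u - w| → u ≠ w → |f u - f v| ≤ H * |f u - f w|) :
    ∀ n : ℕ, ∀ a u b : ℝ, a ≤ u → u < b → 2 ^ n * (b - u) ≤ b - a →
      (1 + H) ^ n * (f b - f u) ≤ H ^ n * (f b - f a) := by
  intro n
  induction n with
  | zero =>
    intro a u b hau hub h
    simp only [pow_zero, one_mul]
    have := hm.monotone hau; linarith
  | succ n ih =>
    intro a u b hau hub h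
    have hbu : 0 < b - u := by linarith
    have h2n : (2:ℝ) ≤ 2 ^ (n + 1) := by
      calc (2:ℝ) = 2 ^ 1 := (pow_one 2).symm
        _ ≤ 2 ^ (n + 1) := pow_le_pow_right₀ one_le_two (by omega)
    have hab : a < b := by nlinarith
    set m := (a + b) / 2 with hmdef
    have hmu : m ≤ u := by
      have : 2 * (b - u) ≤ b - a := by nlinarith
      rw [hmdef]; linarith
    have hmb : m < b := lt_of_le_of_lt hmu hub
    have hmid := qs_mid hm hH hqs hab
    have hcomb : (1 + H) * (f b - f m) ≤ H * (f b - f a) := by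
      have := hmid.2
      linarith
    have h2 : 2 ^ n * (b - u) ≤ b - m := by
      rw [pow_succ] at h
      have : b - m = (b - a) / 2 := by rw [hmdef]; ring
      nlinarith
    have hstep := ih m u b hmu hub h2
    calc (1 + H) ^ (n + 1) * (f b - f u)
        = (1 + H) * ((1 + H) ^ n * (f b - f u)) := by ring
      _ ≤ (1 + H) * (H ^ n * (f b - f m)) :=
          mul_le_mul_of_nonneg_left hstep (by linarith)
      _ = H ^ n * ((1 + H) * (f b - f m)) := by ring
      _ ≤ H ^ n * (H * (f b - f a)) :=
          mul_le_mul_of_nonneg_left hcomb (pow_nonneg (by linarith) n)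
      _ = H ^ (n + 1) * (f b - f a) := by ring

lemma qs_Clow (hm : StrictMono f) (hH : 1 ≤ H)
    (hqs : ∀ u v w : ℝ, |u - v| = |u - w| → u ≠ w → |f u - f v| ≤ H * |f u - f w|)
    (n : ℕ) {a u v b : ℝ} (hau : a ≤ u) (huv : u < v) (hvb : v ≤ b)
    (h : b - a ≤ 2 ^ n * (v - u)) :
    f b - f a ≤ (1 + H) ^ (2 * n) * (f v - f u) := by
  have hub : u < b := lt_of_lt_of_le huv hvb
  have h1 : f b - f u ≤ (1 + H) ^ n * (f v - f u) :=
    qs_L hm hH hqs n u v b huv hvb (by linarith)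
  have h2 : f b - f a ≤ (1 + H) ^ n * (f b - f u) := by
    apply qs_L' hm hH hqs n a u b hau hub
    have : (2:ℝ) ^ n * (v - u) ≤ 2 ^ n * (b - u) :=
      mul_le_mul_of_nonneg_left (by linarith) (by positivity)
    linarith
  have hpow : (0:ℝ) ≤ (1 + H) ^ n := by positivity
  calc f b - f a ≤ (1 + H) ^ n * (f b - f u) := h2
    _ ≤ (1 + H) ^ n * ((1 + H) ^ n * (f v - f u)) :=
        mul_le_mul_of_nonneg_left h1 hpow
    _ = (1 + H) ^ (2 * n) * (f v - f u) := by rw [two_mul, pow_add]; ring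

lemma qs_Cup (hm : StrictMono f) (hH : 1 ≤ H)
    (hqs : ∀ u v w : ℝ, |u - v| = |u - w| → u ≠ w → |f u - f v| ≤ H * |f u - f w|)
    (k : ℕ) {a u v b : ℝ} (hau : a ≤ u) (huv : u < v) (hvb : v ≤ b)
    (h : 2 ^ (2 * k) * (v - u) ≤ b - a) :
    (1 + H) ^ k * (f v - f u) ≤ H ^ k * (f b - f a) := by
  have hub : u < b := lt_of_lt_of_le huv hvb
  have hHk : (0:ℝ) ≤ H ^ k := pow_nonneg (by linarith) k
  by_cases hc : 2 ^ k * (v - u) ≤ b - u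
  · have h1 := qs_U hm hH hqs k u v b huv hvb hc
    have h2 : f b - f u ≤ f b - f a := by have := hm.monotone hau; linarith
    calc (1 + H) ^ k * (f v - f u) ≤ H ^ k * (f b - f u) := h1
      _ ≤ H ^ k * (f b - f a) := mul_le_mul_of_nonneg_left h2 hHk
  · push_neg at hc
    have hd : 2 ^ k * (b - u) ≤ b - a := by
      have h3 : (2:ℝ) ^ k * (b - u) ≤ 2 ^ k * (2 ^ k * (v - u)) :=
        mul_le_mul_of_nonneg_left (le_of_lt hc) (by positivity)
      have h4 : (2:ℝ) ^ k * (2 ^ k * (v - u)) = 2 ^ (2 * k) * (v - u) := by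
        rw [two_mul, pow_add]; ring
      linarith
    have h1 := qs_U' hm hH hqs k a u b hau hub hd
    have h2 : f v - f u ≤ f b - f u := by have := hm.monotone hvb; linarith
    calc (1 + H) ^ k * (f v - f u) ≤ (1 + H) ^ k * (f b - f u) :=
        mul_le_mul_of_nonneg_left h2 (by positivity)
      _ ≤ H ^ k * (f b - f a) := h1

lemma qs_double (hm : StrictMono f) (hH : 1 ≤ H)
    (hqs : ∀ u v w : ℝ, |u - v| = |u - w| → u ≠ w → |f u - f v| ≤ H * |f u - f w|)
    {a b : ℝ} (hab : a < b) :
    f (b + (b - a) / 2) - f (a - (b - a) / 2) ≤ (1 + 2 * H) * (f b - f a) := by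
  have hba : 0 < b - a := by linarith
  -- top extension
  have ht : f (b + (b - a) / 2) - f b ≤ H * (f b - f a) := by
    have habs : |b - (b + (b - a) / 2)| = |b - (b - (b - a) / 2)| := by
      rw [abs_of_neg (by linarith : b - (b + (b - a) / 2) < 0),
        abs_of_pos (by linarith : 0 < b - (b - (b - a) / 2))]
      ring
    have hne : b ≠ b - (b - a) / 2 := by intro hc; nlinarith [hc]
    have h := hqs b (b + (b - a) / 2) (b - (b - a) / 2) habs hne
    have h1 : f b < f (b + (b - a) / 2) := hm (by linarith)
    have h2 : f (b - (b - a) / 2) < f b := hm (by linarith)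
    rw [abs_of_neg (by linarith : f b - f (b + (b - a) / 2) < 0), neg_sub,
      abs_of_pos (by linarith : 0 < f b - f (b - (b - a) / 2))] at h
    have h3 : f a ≤ f (b - (b - a) / 2) := hm.monotone (by linarith)
    nlinarith
  -- bottom extension
  have hb : f a - f (a - (b - a) / 2) ≤ H * (f b - f a) := by
    have habs : |a - (a - (b - a) / 2)| = |a - (a + (b - a) / 2)| := by
      rw [abs_of_pos (by linarith : 0 < a - (a - (b - a) / 2)),
        abs_of_neg (by linarith : a - (a + (b - a) / 2) < 0)]
      ring
    have hne : a ≠ a + (b - a) / 2 := by intro hc; nlinarith [hc]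
    have h := hqs a (a - (b - a) / 2) (a + (b - a) / 2) habs hne
    have h1 : f (a - (b - a) / 2) < f a := hm (by linarith)
    have h2 : f a < f (a + (b - a) / 2) := hm (by linarith)
    rw [abs_of_pos (by linarith : 0 < f a - f (a - (b - a) / 2)),
      abs_of_neg (by linarith : f a - f (a + (b - a) / 2) < 0), neg_sub] at h
    have h3 : f (a + (b - a) / 2) ≤ f b := hm.monotone (by linarith)
    nlinarith
  have hfab : 0 < f b - f a := sub_pos.2 (hm hab)
  linarith

lemma qs_E (hm : StrictMono f) (hH : 1 ≤ H)
    (hqs : ∀ u v w : ℝ, |u - v| = |u - w| → u ≠ w → |f u - f v| ≤ H * |f u - f w|) :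
    ∀ n : ℕ, ∀ a b : ℝ, a < b →
      f ((a + b) / 2 + 2 ^ n * (b - a) / 2) - f ((a + b) / 2 - 2 ^ n * (b - a) / 2) ≤
        (1 + 2 * H) ^ n * (f b - f a) := by
  intro n
  induction n with
  | zero =>
    intro a b hab
    have e1 : (a + b) / 2 + 2 ^ 0 * (b - a) / 2 = b := by norm_num; ring
    have e2 : (a + b) / 2 - 2 ^ 0 * (b - a) / 2 = a := by norm_num; ring
    rw [e1, e2, pow_zero, one_mul]
  | succ n ih =>
    intro a b hab
    have hba : 0 < b - a := by linarith
    set A := (a + b) / 2 - 2 ^ n * (b - a) / 2 with hA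
    set B := (a + b) / 2 + 2 ^ n * (b - a) / 2 with hB
    have hpow : (0:ℝ) < 2 ^ n := by positivity
    have hAB : A < B := by rw [hA, hB]; nlinarith
    have hd := qs_double hm hH hqs hAB
    have e1 : B + (B - A) / 2 = (a + b) / 2 + 2 ^ (n + 1) * (b - a) / 2 := by
      rw [hA, hB, pow_succ]; ring
    have e2 : A - (B - A) / 2 = (a + b) / 2 - 2 ^ (n + 1) * (b - a) / 2 := by
      rw [hA, hB, pow_succ]; ring
    rw [e1, e2] at hd
    have hstep := ih a b hab
    have h2H : (0:ℝ) ≤ 1 + 2 * H := by linarith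
    calc f ((a + b) / 2 + 2 ^ (n + 1) * (b - a) / 2) -
          f ((a + b) / 2 - 2 ^ (n + 1) * (b - a) / 2)
        ≤ (1 + 2 * H) * (f B - f A) := hd
      _ ≤ (1 + 2 * H) * ((1 + 2 * H) ^ n * (f b - f a)) :=
          mul_le_mul_of_nonneg_left hstep h2H
      _ = (1 + 2 * H) ^ (n + 1) * (f b - f a) := by ring

lemma qs_image (hm : StrictMono f) (hc : Continuous f) {a b : ℝ} (hab : a ≤ b) :
    Metric.diam (f '' Icc a b) = f b - f a := by
  have himg : f '' Icc a b = Icc (f a) (f b) := by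
    apply Subset.antisymm
    · rintro _ ⟨x, hx, rfl⟩
      exact ⟨hm.monotone hx.1, hm.monotone hx.2⟩
    · exact intermediate_value_Icc hab hc.continuousOn
  rw [himg, Real.diam_Icc (hm.monotone hab)]

end core


lemma qs_main (f : ℝ → ℝ) (hm : StrictMono f) (hc : Continuous f) (H : ℝ) (hH : 1 ≤ H)
    (hqs : ∀ u v w : ℝ, |u - v| = |u - w| → u ≠ w → |f u - f v| ≤ H * |f u - f w|) :
    (∃ β : ℝ, 0 < β ∧ ∃ p q : ℝ, 0 < p ∧ p ≤ 1 ∧ 1 ≤ q ∧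
      ∀ a b a' b' : ℝ, a < b → a ≤ a' → a' < b' → b' ≤ b →
        β * ((b' - a') / (b - a)) ^ q ≤
            Metric.diam (f '' Set.Icc a' b') / Metric.diam (f '' Set.Icc a b) ∧
          Metric.diam (f '' Set.Icc a' b') / Metric.diam (f '' Set.Icc a b) ≤
            4 * ((b' - a') / (b - a)) ^ p) ∧
    ∀ ρ : ℝ, 0 < ρ → ∃ K : ℝ, 0 < K ∧
      ∀ a b : ℝ, a < b →
        Metric.diam (f ''
            Set.Icc ((a + b) / 2 - ρ * (b - a) / 2) ((a + b) / 2 + ρ * (b - a) / 2)) /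
          Metric.diam (f '' Set.Icc a b) ≤ K := by
  constructor
  · obtain ⟨q, β, hβ, hq, hlow⟩ := qs_numLower H hH
    obtain ⟨p, hp0, hp1, hup⟩ := qs_numUpper H hH
    refine ⟨β, hβ, p, q, hp0, hp1, hq, ?_⟩
    intro a b a' b' hab ha hab' hb
    have hba : 0 < b - a := by linarith
    have hba' : 0 < b' - a' := by linarith
    set t := (b' - a') / (b - a) with htdef
    have ht0 : 0 < t := div_pos hba' hba
    have ht1 : t ≤ 1 := by rw [htdef, div_le_one hba]; linarith
    have htmul : t * (b - a) = b' - a' := div_mul_cancel₀ _ (ne_of_gt hba)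
    have hD : Metric.diam (f '' Icc a b) = f b - f a := qs_image hm hc hab.le
    have hD' : Metric.diam (f '' Icc a' b') = f b' - f a' := qs_image hm hc hab'.le
    have hfD : 0 < f b - f a := sub_pos.2 (hm hab)
    have hfD' : 0 < f b' - f a' := sub_pos.2 (hm hab')
    have htq : 0 < t ^ q := Real.rpow_pos_of_pos ht0 _
    have htp : 0 < t ^ p := Real.rpow_pos_of_pos ht0 _
    rw [hD, hD']
    constructor
    · obtain ⟨n, hn1, hn2⟩ := hlow t ht0 ht1
      have hineq : b - a ≤ 2 ^ n * (b' - a') := by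
        rw [div_le_iff₀ ht0] at hn1
        nlinarith
      have hC := qs_Clow hm hH hqs n ha hab' hb hineq
      rw [le_div_iff₀ hfD]
      calc β * t ^ q * (f b - f a)
          ≤ β * t ^ q * ((1 + H) ^ (2 * n) * (f b' - f a')) := by
            apply mul_le_mul_of_nonneg_left hC (by positivity)
        _ = (β * t ^ q * (1 + H) ^ (2 * n)) * (f b' - f a') := by ring
        _ ≤ 1 * (f b' - f a') := mul_le_mul_of_nonneg_right hn2 (le_of_lt hfD')
        _ = f b' - f a' := one_mul _
    · obtain ⟨k, hk1, hk2⟩ := hup t ht0 ht1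
      have hineq : 2 ^ (2 * k) * (b' - a') ≤ b - a := by
        have h1 : (2:ℝ) ^ (2 * k) * t * (b - a) ≤ 1 * (b - a) :=
          mul_le_mul_of_nonneg_right hk1 (le_of_lt hba)
        rw [mul_assoc, htmul] at h1
        linarith
      have hC := qs_Cup hm hH hqs k ha hab' hb hineq
      rw [div_le_iff₀ hfD]
      have hmono : (1 + H) ^ k * (f b' - f a') ≤ (1 + H) ^ k * (4 * t ^ p * (f b - f a)) := by
        calc (1 + H) ^ k * (f b' - f a') ≤ H ^ k * (f b - f a) := hC
          _ ≤ (4 * t ^ p * (1 + H) ^ k) * (f b - f a) :=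
              mul_le_mul_of_nonneg_right hk2 (le_of_lt hfD)
          _ = (1 + H) ^ k * (4 * t ^ p * (f b - f a)) := by ring
      have hpk : (0:ℝ) < (1 + H) ^ k := by positivity
      exact le_of_mul_le_mul_left hmono hpk
  · intro ρ hρ
    obtain ⟨n, hn⟩ := pow_unbounded_of_one_lt ρ (one_lt_two (α := ℝ))
    refine ⟨(1 + 2 * H) ^ n, by positivity, ?_⟩
    intro a b hab
    have hba : 0 < b - a := by linarith
    have hpow : (0:ℝ) < 2 ^ n := by positivity
    have hlo : (a + b) / 2 - 2 ^ n * (b - a) / 2 ≤ (a + b) / 2 - ρ * (b - a) / 2 := by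
      nlinarith
    have hhi : (a + b) / 2 + ρ * (b - a) / 2 ≤ (a + b) / 2 + 2 ^ n * (b - a) / 2 := by
      nlinarith
    have hcc : (a + b) / 2 - ρ * (b - a) / 2 < (a + b) / 2 + ρ * (b - a) / 2 := by
      nlinarith
    have hE := qs_E hm hH hqs n a b hab
    have hD : Metric.diam (f '' Icc a b) = f b - f a := qs_image hm hc hab.le
    have hD2 : Metric.diam (f '' Icc ((a + b) / 2 - ρ * (b - a) / 2)
        ((a + b) / 2 + ρ * (b - a) / 2)) =
        f ((a + b) / 2 + ρ * (b - a) / 2) - f ((a + b) / 2 - ρ * (b - a) / 2) :=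
      qs_image hm hc hcc.le
    have hfD : 0 < f b - f a := sub_pos.2 (hm hab)
    rw [hD, hD2, div_le_iff₀ hfD]
    have m1 : f ((a + b) / 2 + ρ * (b - a) / 2) ≤ f ((a + b) / 2 + 2 ^ n * (b - a) / 2) :=
      hm.monotone hhi
    have m2 : f ((a + b) / 2 - 2 ^ n * (b - a) / 2) ≤ f ((a + b) / 2 - ρ * (b - a) / 2) :=
      hm.monotone hlo
    linarith

/-- **Lemma 2.3 (distortion lemma).** For a 1-dimensional quasisymmetric mapping `f` there
are `β > 0` and `0 < p ≤ 1 ≤ q` with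
`β (|I'|/|I|)^q ≤ |f(I')|/|f(I)| ≤ 4 (|I'|/|I|)^p` for all intervals `I' ⊆ I`; moreover, for
every `ρ > 0` there is `K_ρ > 0` with `|f(ρI)|/|f(I)| ≤ K_ρ`, where `ρI` is the interval with
the same center as `I` and `|ρI| = ρ|I|`. -/
theorem quasisymmetric_distortion
    (f : ℝ → ℝ) (hf : IsQuasisymmetric f) :
    (∃ β : ℝ, 0 < β ∧ ∃ p q : ℝ, 0 < p ∧ p ≤ 1 ∧ 1 ≤ q ∧
      ∀ a b a' b' : ℝ, a < b → a ≤ a' → a' < b' → b' ≤ b →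
        β * ((b' - a') / (b - a)) ^ q ≤
            Metric.diam (f '' Set.Icc a' b') / Metric.diam (f '' Set.Icc a b) ∧
          Metric.diam (f '' Set.Icc a' b') / Metric.diam (f '' Set.Icc a b) ≤
            4 * ((b' - a') / (b - a)) ^ p) ∧
    ∀ ρ : ℝ, 0 < ρ → ∃ K : ℝ, 0 < K ∧
      ∀ a b : ℝ, a < b →
        Metric.diam (f ''
            Set.Icc ((a + b) / 2 - ρ * (b - a) / 2) ((a + b) / 2 + ρ * (b - a) / 2)) /
          Metric.diam (f '' Set.Icc a b) ≤ K := by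
  obtain ⟨hhomeo, η, hη⟩ := hf
  set H : ℝ := max ((η ⟨1, by norm_num⟩).1) 1 with hHdef
  have hH : 1 ≤ H := le_max_right _ _
  have hinj : Function.Injective f := hhomeo.injective
  have hcont : Continuous f := hhomeo.continuous
  have hqs : ∀ u v w : ℝ, |u - v| = |u - w| → u ≠ w → |f u - f v| ≤ H * |f u - f w| := by
    intro u v w he hne
    have hfw : f u ≠ f w := fun h => hne (hinj h)
    have hpos : 0 < |f u - f w| := abs_pos.mpr (sub_ne_zero.mpr hfw)
    have huw : |u - w| ≠ 0 := by
      simp only [ne_eq, abs_eq_zero, sub_eq_zero]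
      exact hne
    have h1 : (⟨|u - v| / |u - w|,
        Set.mem_Ici.mpr (div_nonneg (abs_nonneg _) (abs_nonneg _))⟩ : Set.Ici (0:ℝ)) =
        ⟨1, by norm_num⟩ := Subtype.ext (by simp only []; rw [he, div_self huw])
    have h0 := hη u v w hne
    rw [h1] at h0
    have h2 : |f u - f v| / |f u - f w| ≤ H := le_trans h0 (le_max_left _ _)
    calc |f u - f v| = (|f u - f v| / |f u - f w|) * |f u - f w| := by field_simp
      _ ≤ H * |f u - f w| := mul_le_mul_of_nonneg_right h2 (abs_nonneg _)
  rcases hcont.strictMono_of_inj hinj with hmono | hanti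
  · exact qs_main f hmono hcont H hH hqs
  · have hmono' : StrictMono (fun x => -f x) := fun x y hxy => neg_lt_neg (hanti hxy)
    have hqs' : ∀ u v w : ℝ, |u - v| = |u - w| → u ≠ w →
        |(fun x => -f x) u - (fun x => -f x) v| ≤ H * |(fun x => -f x) u - (fun x => -f x) w| := by
      intro u v w he hne
      simp only []
      rw [show -f u - -f v = -(f u - f v) by ring, abs_neg,
        show -f u - -f w = -(f u - f w) by ring, abs_neg]
      exact hqs u v w he hne
    have key := qs_main (fun x => -f x) hmono' hcont.neg H hH hqs'
    have hdiam : ∀ s : Set ℝ, Metric.diam ((fun x => -f x) '' s) = Metric.diam (f '' s) := by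
      intro s
      rw [show ((fun x => -f x) '' s) = Neg.neg '' (f '' s) from (Set.image_image Neg.neg f s).symm]
      exact Isometry.diam_image (isometry_neg : Isometry (Neg.neg : ℝ → ℝ)) _
    simp only [hdiam] at key
    exact key
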